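/- Let L be a nondegenerate integral lattice, v ∈ L with ℓ = v·v ≠ 0, and let N = v^⊥ ⊕ ℤv ⊆ L (the internal direct sum of the orthogonal complement of v and the span of v). Let d = gcd{v·w : w ∈ L}. Then the index [L : N] equals ℓ/d. -/

import Mathlib

open BigOperators Matrix

/-- The bilinear form on `Fin n → ℤ` determined by the Gram matrix `A`. -/
def bilin (n : ℕ) (A : Matrix (Fin n) (Fin n) ℤ) (x y : Fin n → ℤ) : ℤ :=
  x ⬝ᵥ A.mulVec y

/-- The orthogonal complement of `v` in the lattice `(Fin n → ℤ, A)`. -/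
def perp (n : ℕ) (A : Matrix (Fin n) (Fin n) ℤ) (v : Fin n → ℤ) :
    Submodule ℤ (Fin n → ℤ) where
  carrier := {x | bilin n A v x = 0}
  add_mem' := by
    intro a b ha hb
    simp only [Set.mem_setOf_eq, bilin, Matrix.mulVec_add, dotProduct_add] at *
    omega
  zero_mem' := by simp [bilin]
  smul_mem' := by
    intro c x hx
    simp only [Set.mem_setOf_eq, bilin] at *
    rw [Matrix.mulVec_smul, dotProduct_smul, hx, smul_zero]

lemma bilin_add (n : ℕ) (A : Matrix (Fin n) (Fin n) ℤ) (v x y : Fin n → ℤ) :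
    bilin n A v (x + y) = bilin n A v x + bilin n A v y := by
  simp [bilin, Matrix.mulVec_add, dotProduct_add]

lemma bilin_smul (n : ℕ) (A : Matrix (Fin n) (Fin n) ℤ) (v x : Fin n → ℤ) (c : ℤ) :
    bilin n A v (c • x) = c * bilin n A v x := by
  rw [bilin, Matrix.mulVec_smul, dotProduct_smul, smul_eq_mul, bilin]

lemma bilin_sub (n : ℕ) (A : Matrix (Fin n) (Fin n) ℤ) (v x y : Fin n → ℤ) :
    bilin n A v (x - y) = bilin n A v x - bilin n A v y := by
  have := bilin_add n A v (x - y) y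
  simp at this; omega

/-- For a nondegenerate lattice `L`, `v ∈ L` with `ℓ = v·v ≠ 0`, and
`N = v^⊥ ⊕ ℤv ⊆ L`, with `d = gcd{v·w : w ∈ L}`, the index `[L : N]` equals `ℓ/d`. -/
theorem stmt1 (n : ℕ) (A : Matrix (Fin n) (Fin n) ℤ) (hA : A.IsSymm)
    (hnd : A.det ≠ 0) (v : Fin n → ℤ) (hv : bilin n A v v ≠ 0)
    (d : ℤ) (hd : 0 < d) (hdvd : ∀ w, d ∣ bilin n A v w)
    (hmem : ∃ w, bilin n A v w = d)
    (N : Submodule ℤ (Fin n → ℤ))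
    (hN : N = perp n A v ⊔ Submodule.span ℤ {v}) :
    (N.toAddSubgroup).index = ((bilin n A v v) / d).natAbs := by
  obtain ⟨e, he⟩ := hdvd v
  have hdne : d ≠ 0 := hd.ne'
  have he' : bilin n A v v / d = e := by rw [he, Int.mul_ediv_cancel_left _ hdne]
  -- the homomorphism x ↦ (v·x)/d
  let φ : (Fin n → ℤ) →+ ℤ :=
    { toFun := fun x => bilin n A v x / d
      map_zero' := by simp [bilin]
      map_add' := by
        intro x y
        obtain ⟨a, ha⟩ := hdvd x
        obtain ⟨b, hb⟩ := hdvd y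
        simp only [bilin_add, ha, hb, ← mul_add, Int.mul_ediv_cancel_left _ hdne] }
  have hφ : ∀ x, bilin n A v x = d * φ x := by
    intro x
    obtain ⟨a, ha⟩ := hdvd x
    simp only [φ, AddMonoidHom.coe_mk, ZeroHom.coe_mk, ha,
      Int.mul_ediv_cancel_left _ hdne]
  have hsurj : Function.Surjective φ := by
    obtain ⟨w, hw⟩ := hmem
    intro m
    refine ⟨m • w, ?_⟩
    show bilin n A v (m • w) / d = m
    rw [bilin_smul, hw, Int.mul_ediv_cancel _ hdne]
  have hene : e ≠ 0 := by rintro rfl; simp [he] at hv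
  have key : N.toAddSubgroup = AddSubgroup.comap φ (AddSubgroup.zmultiples e) := by
    ext x
    simp only [Submodule.mem_toAddSubgroup, AddSubgroup.mem_comap,
      AddSubgroup.mem_zmultiples_iff, hN, Submodule.mem_sup]
    constructor
    · rintro ⟨y, hy, z, hz, rfl⟩
      obtain ⟨k, rfl⟩ := Submodule.mem_span_singleton.mp hz
      refine ⟨k, ?_⟩
      have hy0 : bilin n A v y = 0 := hy
      have hbil : bilin n A v (y + k • v) = k * (d * e) := by
        rw [bilin_add, hy0, bilin_smul, ← he]; ring
      have h3 : d * φ (y + k • v) = d * (k * e) := by rw [← hφ, hbil]; ring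
      have hφeq : φ (y + k • v) = k * e := mul_left_cancel₀ hdne h3
      show k • e = φ (y + k • v)
      rw [hφeq, zsmul_eq_mul]; push_cast; ring
    · rintro ⟨k, hk⟩
      refine ⟨x - k • v, ?_, k • v, Submodule.mem_span_singleton.mpr ⟨k, rfl⟩, by ring⟩
      show bilin n A v (x - k • v) = 0
      rw [bilin_sub, bilin_smul]
      have h1 := hφ x
      have h2 : (k • e : ℤ) = φ x := hk
      rw [zsmul_eq_mul] at h2
      rw [h1, ← h2, he]; push_cast; ring
  rw [key, AddSubgroup.index_comap_of_surjective _ hsurj, Int.index_zmultiples, he']
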